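/- Let Λ = diag(λ₁,…,λₙ) with λ_i < 0 distinct, and Ψ_{ij} = −1/(λ_i+λ_j). Suppose (β, γ, μ_β, μ_γ) satisfies diag(γ)Ψdiag(γ)β = μ_β Λ²β and diag(β)Ψdiag(β)γ = μ_γ Λ²γ with the normalization β᷀Λ²β = γ᷀Λ²γ = 1. Then the supports of β and γ (index sets of nonzero entries) are either disjoint or equal. -/

import Mathlib

open Matrix MeasureTheory Filter Real Set

lemma tendsto_exp_mul_zero {c : ℝ} (hc : c < 0) :
    Tendsto (fun t : ℝ => Real.exp (c * t)) atTop (nhds 0) := by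
  have h1 : Tendsto (fun t : ℝ => (-c) * t) atTop atTop :=
    Tendsto.const_mul_atTop (by linarith) tendsto_id
  refine (Real.tendsto_exp_neg_atTop_nhds_zero.comp h1).congr fun t => ?_
  show Real.exp (-(-c * t)) = _
  ring_nf

lemma integral_exp_neg_mul_Ioi_zero {b : ℝ} (hb : 0 < b) :
    ∫ t in Ioi (0:ℝ), Real.exp (-b * t) = 1 / b := by
  have hd : ∀ x ∈ Ici (0:ℝ), HasDerivAt (fun t => -Real.exp (-b*t)/b) (Real.exp (-b*x)) x := by
    intro x _
    have h0 : HasDerivAt (fun t : ℝ => -b*t) (-b) x := by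
      simpa using (hasDerivAt_id x).const_mul (-b)
    have h2 := (h0.exp.neg).div_const b
    refine h2.congr_deriv ?_
    field_simp
  have htend : Tendsto (fun t : ℝ => -Real.exp (-b*t)/b) atTop (nhds 0) := by
    have := (tendsto_exp_mul_zero (c := -b) (by linarith)).neg.div_const b
    simpa using this
  have := integral_Ioi_of_hasDerivAt_of_tendsto' hd (exp_neg_integrableOn_Ioi 0 hb) htend
  simp only [neg_mul] at this ⊢
  rw [this]
  simp [Real.exp_zero]
  ring

lemma cauchy_quad_pos {n : ℕ} (x : Fin n → ℝ) (hx : ∀ i, 0 < x i)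
    (hinjx : Function.Injective x) (v : Fin n → ℝ) (hv : v ≠ 0) :
    0 < ∑ i, ∑ j, v i * v j / (x i + x j) := by
  set g : ℝ → ℝ := fun t => ∑ i, v i * Real.exp (-x i * t) with hg
  have hterm_int : ∀ i j : Fin n, IntegrableOn
      (fun t => v i * v j * Real.exp (-(x i + x j) * t)) (Ioi (0:ℝ)) := fun i j =>
    ((exp_neg_integrableOn_Ioi 0 (by have := hx i; have := hx j; linarith)).const_mul _)
  have hsq : ∀ t : ℝ, g t ^ 2 = ∑ i, ∑ j, v i * v j * Real.exp (-(x i + x j) * t) := by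
    intro t
    rw [hg, sq, Finset.sum_mul_sum]
    refine Finset.sum_congr rfl fun i _ => Finset.sum_congr rfl fun j _ => ?_
    rw [show -(x i + x j) * t = (-x i * t) + (-x j * t) by ring, Real.exp_add]
    ring
  have hint_inner : ∀ i, IntegrableOn
      (fun t => ∑ j, v i * v j * Real.exp (-(x i + x j) * t)) (Ioi (0:ℝ)) :=
    fun i => integrable_finset_sum _ fun j _ => hterm_int i j
  have hIg : IntegrableOn (fun t => g t ^ 2) (Ioi (0:ℝ)) := by
    have h := integrable_finset_sum (μ := volume.restrict (Ioi (0:ℝ)))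
      (f := fun i t => ∑ j, v i * v j * Real.exp (-(x i + x j) * t)) Finset.univ
      (fun i _ => hint_inner i)
    exact h.congr (ae_of_all _ fun t => (hsq t).symm)
  have hval : ∫ t in Ioi (0:ℝ), g t ^ 2 = ∑ i, ∑ j, v i * v j / (x i + x j) := by
    simp_rw [hsq]
    rw [integral_finset_sum _ (fun i _ => hint_inner i)]
    refine Finset.sum_congr rfl fun i _ => ?_
    rw [integral_finset_sum _ (fun j _ => hterm_int i j)]
    refine Finset.sum_congr rfl fun j _ => ?_
    rw [integral_const_mul,
      integral_exp_neg_mul_Ioi_zero (by have := hx i; have := hx j; linarith)]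
    ring
  -- find t0 > 0 with g t0 ≠ 0
  obtain ⟨i0, hi0mem, hi0min⟩ : ∃ i0 ∈ Finset.univ.filter (fun i => v i ≠ 0),
      ∀ i ∈ Finset.univ.filter (fun i => v i ≠ 0), x i0 ≤ x i := by
    apply Finset.exists_min_image
    obtain ⟨i, hi⟩ := Function.ne_iff.mp hv
    exact ⟨i, by simpa using hi⟩
  have hvi0 : v i0 ≠ 0 := by simpa using (Finset.mem_filter.mp hi0mem).2
  have htend : Tendsto (fun t => ∑ i, v i * Real.exp ((x i0 - x i) * t)) atTop (nhds (v i0)) := by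
    have hrw : (v i0) = ∑ i : Fin n, (if i = i0 then v i0 else 0) := by simp
    rw [hrw]
    apply tendsto_finset_sum
    intro i _
    by_cases h : i = i0
    · subst h; simpa [sub_self] using (tendsto_const_nhds : Tendsto (fun _ : ℝ => v i) atTop _)
    · by_cases hvi : v i = 0
      · simpa [hvi, h] using (tendsto_const_nhds : Tendsto (fun _ : ℝ => (0:ℝ)) atTop _)
      · have hne : x i0 ≠ x i := fun he => h (hinjx he).symm
        have hxi : x i0 < x i := lt_of_le_of_ne (hi0min i (by simp [hvi])) hne
        have := (tendsto_exp_mul_zero (show x i0 - x i < 0 by linarith)).const_mul (v i)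
        simpa [h] using this
  obtain ⟨t0, ht0pos, ht0⟩ : ∃ t0 : ℝ, 0 < t0 ∧
      (∑ i, v i * Real.exp ((x i0 - x i) * t0)) ≠ 0 := by
    obtain ⟨t0, h2, h3⟩ := ((htend.eventually_ne hvi0).and (eventually_gt_atTop 0)).exists
    exact ⟨t0, h3, h2⟩
  have hg0 : g t0 ≠ 0 := by
    intro hgz
    apply ht0
    have hre : (∑ i, v i * Real.exp ((x i0 - x i) * t0)) = Real.exp (x i0 * t0) * g t0 := by
      rw [hg, Finset.mul_sum]
      refine Finset.sum_congr rfl fun i _ => ?_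
      rw [show (x i0 - x i) * t0 = x i0 * t0 + (-x i * t0) by ring, Real.exp_add]
      ring
    rw [hre, hgz, mul_zero]
  have hgc : Continuous g := by
    apply continuous_finset_sum
    intro i _
    exact continuous_const.mul (Real.continuous_exp.comp (continuous_const.mul continuous_id))
  have hU : IsOpen ({t : ℝ | g t ≠ 0} ∩ Ioi 0) :=
    (isOpen_compl_singleton.preimage hgc).inter isOpen_Ioi
  obtain ⟨ε, hε, hball⟩ := Metric.isOpen_iff.mp hU t0 ⟨hg0, ht0pos⟩
  rw [← hval, setIntegral_pos_iff_support_of_nonneg_ae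
      (ae_of_all _ fun t => sq_nonneg (g t)) hIg]
  have hsub : Metric.ball t0 ε ⊆ Function.support (fun t => g t ^ 2) ∩ Ioi 0 := by
    intro t ht
    obtain ⟨h1, h2⟩ := hball ht
    exact ⟨pow_ne_zero 2 h1, h2⟩
  calc (0:ENNReal) < volume (Metric.ball t0 ε) := by
        rw [Real.volume_ball]; exact ENNReal.ofReal_pos.mpr (by linarith)
    _ ≤ _ := measure_mono hsub

theorem supports_disjoint_or_equal
    (n : ℕ) (l : Fin n → ℝ)
    (hneg : ∀ i, l i < 0) (hinj : Function.Injective l)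
    (Ψ : Matrix (Fin n) (Fin n) ℝ) (hΨ : Ψ = Matrix.of fun i j => -1 / (l i + l j))
    (Λ : Matrix (Fin n) (Fin n) ℝ) (hΛ : Λ = Matrix.diagonal l)
    (β γ : Fin n → ℝ) (μβ μγ : ℝ)
    (h1 : (diagonal γ * Ψ * diagonal γ) *ᵥ β = μβ • ((Λ * Λ) *ᵥ β))
    (h2 : (diagonal β * Ψ * diagonal β) *ᵥ γ = μγ • ((Λ * Λ) *ᵥ γ))
    (hβn : β ⬝ᵥ (Λ * Λ) *ᵥ β = 1) (hγn : γ ⬝ᵥ (Λ * Λ) *ᵥ γ = 1) :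
    {i | β i ≠ 0} ∩ {i | γ i ≠ 0} = ∅ ∨ {i | β i ≠ 0} = {i | γ i ≠ 0} := by
  by_cases hd : {i | β i ≠ 0} ∩ {i | γ i ≠ 0} = ∅
  · exact Or.inl hd
  right
  obtain ⟨k, hkβ, hkγ⟩ : ∃ k, β k ≠ 0 ∧ γ k ≠ 0 := by
    rcases Set.nonempty_iff_ne_empty.mpr hd with ⟨k, hk1, hk2⟩
    exact ⟨k, hk1, hk2⟩
  set x : Fin n → ℝ := fun i => -(l i) with hx
  have hxpos : ∀ i, 0 < x i := fun i => by have := hneg i; simp [hx]; linarith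
  have hxinj : Function.Injective x := fun a b h => hinj (by
    have : -(l a) = -(l b) := h
    linarith)
  set v : Fin n → ℝ := fun i => β i * γ i with hv
  have hvne : v ≠ 0 := by
    intro h
    have h' := congrFun h k
    simp [hv] at h'
    rcases h' with h' | h'
    · exact hkβ h'
    · exact hkγ h'
  have hΨ' : ∀ i j, Ψ i j = 1 / (x i + x j) := by
    intro i j
    have hij : l i + l j ≠ 0 := by have := hneg i; have := hneg j; linarith
    rw [hΨ]
    show -1 / (l i + l j) = 1 / (-(l i) + -(l j))
    rw [show (-(l i) + -(l j)) = -(l i + l j) by ring, div_neg, neg_div]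
  set c := ∑ i, ∑ j, v i * v j / (x i + x j) with hc
  have hcpos : 0 < c := cauchy_quad_pos x hxpos hxinj v hvne
  have hΛ2 : ∀ (w : Fin n → ℝ) (i : Fin n), ((Λ * Λ) *ᵥ w) i = l i * l i * w i := by
    intro w i
    rw [hΛ, Matrix.diagonal_mul_diagonal, Matrix.mulVec_diagonal]
  have hA : ∀ (a b : Fin n → ℝ) (i : Fin n), ((diagonal a * Ψ * diagonal a) *ᵥ b) i
      = ∑ j, a i * Ψ i j * a j * b j := by
    intro a b i
    have he : ∀ j, (diagonal a * Ψ * diagonal a) i j = a i * Ψ i j * a j := by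
      intro j; rw [Matrix.mul_diagonal, Matrix.diagonal_mul]
    simp only [Matrix.mulVec, dotProduct, he]
  have hμβ : μβ = c := by
    have h := congrArg (fun w => β ⬝ᵥ w) h1
    simp only [dotProduct_smul, smul_eq_mul] at h
    rw [hβn, mul_one] at h
    rw [← h, hc, dotProduct]
    refine Finset.sum_congr rfl fun i _ => ?_
    rw [hA γ β i, Finset.mul_sum]
    refine Finset.sum_congr rfl fun j _ => ?_
    rw [hΨ' i j]
    simp only [hv]
    ring
  have hμγ : μγ = c := by
    have h := congrArg (fun w => γ ⬝ᵥ w) h2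
    simp only [dotProduct_smul, smul_eq_mul] at h
    rw [hγn, mul_one] at h
    rw [← h, hc, dotProduct]
    refine Finset.sum_congr rfl fun i _ => ?_
    rw [hA β γ i, Finset.mul_sum]
    refine Finset.sum_congr rfl fun j _ => ?_
    rw [hΨ' i j]
    simp only [hv]
    ring
  have hμβ0 : μβ ≠ 0 := by rw [hμβ]; exact ne_of_gt hcpos
  have hμγ0 : μγ ≠ 0 := by rw [hμγ]; exact ne_of_gt hcpos
  ext i
  simp only [Set.mem_setOf_eq]
  have hli : l i ≠ 0 := ne_of_lt (hneg i)
  constructor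
  · intro hβi
    intro hγi0
    have h := congrFun h1 i
    have hL : ((diagonal γ * Ψ * diagonal γ) *ᵥ β) i = 0 := by
      rw [hA]
      exact Finset.sum_eq_zero fun j _ => by rw [hγi0]; ring
    have hR : (μβ • ((Λ * Λ) *ᵥ β)) i = μβ * (l i * l i * β i) := by
      simp only [Pi.smul_apply, smul_eq_mul, hΛ2]
    rw [hL, hR] at h
    have : β i = 0 := by
      rcases mul_eq_zero.mp h.symm with h' | h'
      · exact absurd h' hμβ0
      · rcases mul_eq_zero.mp h' with h'' | h''
        · exact absurd (mul_self_eq_zero.mp h'') hli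
        · exact h''
    exact hβi this
  · intro hγi hβi0
    have h := congrFun h2 i
    have hL : ((diagonal β * Ψ * diagonal β) *ᵥ γ) i = 0 := by
      rw [hA]
      exact Finset.sum_eq_zero fun j _ => by rw [hβi0]; ring
    have hR : (μγ • ((Λ * Λ) *ᵥ γ)) i = μγ * (l i * l i * γ i) := by
      simp only [Pi.smul_apply, smul_eq_mul, hΛ2]
    rw [hL, hR] at h
    have : γ i = 0 := by
      rcases mul_eq_zero.mp h.symm with h' | h'
      · exact absurd h' hμγ0
      · rcases mul_eq_zero.mp h' with h'' | h''
        · exact absurd (mul_self_eq_zero.mp h'') hli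
        · exact h''
    exact hγi this
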